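/- If the target potential is exactly quadratic, f(s) = ½ sᵀWs + bᵀs with the same matrix W used in the preconditioning, then the PAVG Metropolis–Hastings acceptance ratio equals 1 for every current state s_t, auxiliary draw z_t, and proposal s*; i.e., PAVG is rejection-free. -/
import Mathlib


open Matrix

/-- PAVG is rejection-free for a quadratic potential f(s) = ½ sᵀWs + bᵀs with the same W
used in preconditioning: the Metropolis–Hastings acceptance ratio equals 1 for every
current state s_t, auxiliary draw z_t and proposal s*. -/
theorem stmt4 {d : ℕ} (S : Finset (Fin d → ℝ))
    (W D : Matrix (Fin d) (Fin d) ℝ) (b zt : Fin d → ℝ)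
    (hW : W.IsSymm) (hD : D.IsDiag) (hpos : (W + D).PosDef)
    (st sstar : Fin d → ℝ) (hst : st ∈ S) (hsstar : sstar ∈ S)
    (f : (Fin d → ℝ) → ℝ) (hf : ∀ s, f s = (1 / 2) * (s ⬝ᵥ (W *ᵥ s)) + b ⬝ᵥ s)
    (Q : (Fin d → ℝ) → ℝ)
    (hQ : ∀ s, Q s =
      Real.exp (-(1 / 2) * (s ⬝ᵥ (D *ᵥ s)) + (b + (W + D) *ᵥ zt) ⬝ᵥ s) /
        ∑ s' ∈ S, Real.exp (-(1 / 2) * (s' ⬝ᵥ (D *ᵥ s')) + (b + (W + D) *ᵥ zt) ⬝ᵥ s')) :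
    Real.exp (f sstar - f st) *
        (Real.exp (-(1 / 2) * ((zt - sstar) ⬝ᵥ ((W + D) *ᵥ (zt - sstar)))) * Q st) /
        (Real.exp (-(1 / 2) * ((zt - st) ⬝ᵥ ((W + D) *ᵥ (zt - st)))) * Q sstar) = 1 := by
  have hWsym : ∀ u v : Fin d → ℝ, u ⬝ᵥ (W *ᵥ v) = v ⬝ᵥ (W *ᵥ u) := by
    intro u v
    rw [dotProduct_mulVec, ← mulVec_transpose, hW.eq, dotProduct_comm]
  have hDsym : ∀ u v : Fin d → ℝ, u ⬝ᵥ (D *ᵥ v) = v ⬝ᵥ (D *ᵥ u) := by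
    intro u v
    rw [dotProduct_mulVec, ← mulVec_transpose, hD.isSymm.eq, dotProduct_comm]
  have hT : (0:ℝ) < ∑ s' ∈ S,
      Real.exp (-(1 / 2) * (s' ⬝ᵥ (D *ᵥ s')) + (b + (W + D) *ᵥ zt) ⬝ᵥ s') :=
    Finset.sum_pos' (fun i _ => (Real.exp_pos _).le)
      ⟨st, hst, Real.exp_pos _⟩
  set T : ℝ := ∑ s' ∈ S,
      Real.exp (-(1 / 2) * (s' ⬝ᵥ (D *ᵥ s')) + (b + (W + D) *ᵥ zt) ⬝ᵥ s') with hTdef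
  set a1 : ℝ := -(1 / 2) * ((zt - sstar) ⬝ᵥ ((W + D) *ᵥ (zt - sstar))) with ha1
  set a2 : ℝ := -(1 / 2) * ((zt - st) ⬝ᵥ ((W + D) *ᵥ (zt - st))) with ha2
  set e1 : ℝ := -(1 / 2) * (st ⬝ᵥ (D *ᵥ st)) + (b + (W + D) *ᵥ zt) ⬝ᵥ st with he1
  set e2 : ℝ := -(1 / 2) * (sstar ⬝ᵥ (D *ᵥ sstar)) + (b + (W + D) *ᵥ zt) ⬝ᵥ sstar with he2
  have key : f sstar + a1 + e1 = f st + a2 + e2 := by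
    rw [ha1, ha2, he1, he2]
    simp only [hf, add_mulVec, mulVec_sub, dotProduct_add, dotProduct_sub,
      sub_dotProduct, add_dotProduct]
    rw [hWsym zt sstar, hWsym zt st, hDsym zt sstar, hDsym zt st,
      dotProduct_comm b sstar, dotProduct_comm b st,
      dotProduct_comm (W *ᵥ zt) st, dotProduct_comm (D *ᵥ zt) st,
      dotProduct_comm (W *ᵥ zt) sstar, dotProduct_comm (D *ᵥ zt) sstar]
    ring
  rw [hQ, hQ]
  have hmain : Real.exp (f sstar - f st) * Real.exp a1 * Real.exp e1 =
      Real.exp a2 * Real.exp e2 := by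
    rw [← Real.exp_add, ← Real.exp_add, ← Real.exp_add]
    congr 1
    linarith [key]
  rw [div_eq_one_iff_eq (by positivity)]
  calc Real.exp (f sstar - f st) * (Real.exp a1 * (Real.exp e1 / T))
      = Real.exp (f sstar - f st) * Real.exp a1 * Real.exp e1 / T := by ring
    _ = Real.exp a2 * Real.exp e2 / T := by rw [hmain]
    _ = Real.exp a2 * (Real.exp e2 / T) := by ring
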